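/- arXiv:2008.07435 — 2 statements merged into one kernel-verified Lean document; each statement's English description precedes it below -/
import Mathlib

section
/- Let m ≥ 1, γ ≠ 0, and let n : ℝ^{n-1} → ℂ^{m×m} be a measurable matrix field satisfying, for a.e. ξ and a constant c > 0: |n(ξ)| ≤ c min{|ξ|², |ξ|^{−1}} and Re[n(ξ)a·conj(a)] ≥ c^{−1} min{|ξ|², |ξ|^{−1}}|a|² for all a ∈ ℂ^m. Let o₀ = diag(d₁,...,d_m) with all d_ℓ > 0, o₁ = diag(σ₁,...,σ_m) with all σ_ℓ > 0, o(ξ) = o₀ + 4π²|ξ|² o₁, and p(ξ) = n(ξ)* o(ξ) − 2πi γ ξ₁ I. Then there exists C > 0, depending only on c, γ, the d_ℓ and σ_ℓ, such that for a.e. ξ and all b ∈ ℂ^m: C^{−1} |p(ξ) b|² ≤ [(ξ₁² + |ξ|⁴) 𝟙_{|ξ|≤1}(ξ) + |ξ|² 𝟙_{|ξ|>1}(ξ)] |b|² ≤ C |p(ξ) b|². In particular p(ξ) is invertible for a.e. ξ ≠ 0. -/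
open scoped ComplexConjugate

/-- The Euclidean norm on `ℂ^m`. -/
noncomputable def cvecNorm {m : ℕ} (b : Fin m → ℂ) : ℝ :=
  Real.sqrt (∑ i, ‖b i‖ ^ 2)

lemma cvecNorm_nonneg {m : ℕ} (b : Fin m → ℂ) : 0 ≤ cvecNorm b := Real.sqrt_nonneg _

lemma cvecNorm_sq {m : ℕ} (b : Fin m → ℂ) : cvecNorm b ^ 2 = ∑ i, ‖b i‖ ^ 2 :=
  Real.sq_sqrt (Finset.sum_nonneg fun i _ => sq_nonneg _)

lemma cvecNorm_eq_norm {m : ℕ} (b : Fin m → ℂ) :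
    cvecNorm b = ‖(WithLp.equiv 2 (Fin m → ℂ)).symm b‖ := by
  rw [EuclideanSpace.norm_eq]
  rfl

lemma cvecNorm_sub_le {m : ℕ} (x y : Fin m → ℂ) :
    cvecNorm (x - y) ≤ cvecNorm x + cvecNorm y := by
  simp only [cvecNorm_eq_norm]
  rw [show (WithLp.equiv 2 (Fin m → ℂ)).symm (x - y)
      = (WithLp.equiv 2 (Fin m → ℂ)).symm x - (WithLp.equiv 2 (Fin m → ℂ)).symm y from rfl]
  exact norm_sub_le _ _

lemma cvecNorm_smulfun {m : ℕ} (k : ℂ) (b : Fin m → ℂ) :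
    cvecNorm (fun i => k * b i) = ‖k‖ * cvecNorm b := by
  unfold cvecNorm
  rw [← Real.sqrt_sq (norm_nonneg k), ← Real.sqrt_mul (sq_nonneg _), Finset.mul_sum]
  congr 1
  refine Finset.sum_congr rfl fun i _ => ?_
  simp only [norm_mul]; ring

lemma cvecNorm_CS {m : ℕ} (x y : Fin m → ℂ) :
    ‖∑ i, x i * conj (y i)‖ ≤ cvecNorm x * cvecNorm y := by
  have h := norm_inner_le_norm (𝕜 := ℂ)
    ((WithLp.equiv 2 (Fin m → ℂ)).symm y) ((WithLp.equiv 2 (Fin m → ℂ)).symm x)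
  rw [PiLp.inner_apply] at h
  simp only [RCLike.inner_apply] at h
  calc ‖∑ i, x i * conj (y i)‖ = ‖∑ i, conj (y i) * x i‖ := by
        congr 1; exact Finset.sum_congr rfl fun i _ => mul_comm _ _
    _ ≤ _ := by
        rw [cvecNorm_eq_norm, cvecNorm_eq_norm, mul_comm]
        refine le_trans (le_of_eq ?_) h
        congr 1; exact Finset.sum_congr rfl fun i _ => mul_comm _ _

lemma cvecNorm_diag_le {m : ℕ} (w : Fin m → ℝ) (hi : ℝ) (hhi : 0 ≤ hi)
    (h : ∀ i, |w i| ≤ hi) (b : Fin m → ℂ) :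
    cvecNorm (fun i => (w i : ℂ) * b i) ≤ hi * cvecNorm b := by
  unfold cvecNorm
  rw [← Real.sqrt_sq hhi, ← Real.sqrt_mul (sq_nonneg _), Finset.mul_sum]
  apply Real.sqrt_le_sqrt
  apply Finset.sum_le_sum
  intro i _
  have : ‖((w i : ℂ)) * b i‖ ^ 2 = |w i| ^ 2 * ‖b i‖ ^ 2 := by
    simp only [norm_mul, Complex.norm_real, Real.norm_eq_abs]; ring
  rw [this]
  exact mul_le_mul_of_nonneg_right (pow_le_pow_left₀ (abs_nonneg _) (h i) 2) (sq_nonneg _)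

lemma le_cvecNorm_diag {m : ℕ} (w : Fin m → ℝ) (lo : ℝ) (hlo : 0 ≤ lo)
    (h : ∀ i, lo ≤ w i) (b : Fin m → ℂ) :
    lo * cvecNorm b ≤ cvecNorm (fun i => (w i : ℂ) * b i) := by
  unfold cvecNorm
  rw [← Real.sqrt_sq hlo, ← Real.sqrt_mul (sq_nonneg _), Finset.mul_sum]
  apply Real.sqrt_le_sqrt
  apply Finset.sum_le_sum
  intro i _
  have : ‖((w i : ℂ)) * b i‖ ^ 2 = |w i| ^ 2 * ‖b i‖ ^ 2 := by
    simp only [norm_mul, Complex.norm_real, Real.norm_eq_abs]; ring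
  rw [this]
  exact mul_le_mul_of_nonneg_right
    (pow_le_pow_left₀ hlo (le_trans (h i) (le_abs_self _)) 2) (sq_nonneg _)

lemma mulVec_conj_sum {m : ℕ} (A : Matrix (Fin m) (Fin m) ℂ) (x y : Fin m → ℂ) :
    ∑ i, (A.conjTranspose.mulVec y) i * conj (x i)
      = conj (∑ i, (A.mulVec x) i * conj (y i)) := by
  simp only [Matrix.mulVec, dotProduct, Matrix.conjTranspose_apply, map_sum, map_mul,
    Finset.sum_mul, RingHomCompTriple.comp_apply, RingHom.id_apply, Complex.conj_conj]
  rw [Finset.sum_comm]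
  refine Finset.sum_congr rfl fun i _ => Finset.sum_congr rfl fun j _ => ?_
  rw [show star (A i j) = (starRingEnd ℂ) (A i j) from rfl]
  ring

lemma sum_self_conj {m : ℕ} (x : Fin m → ℂ) :
    ∑ i, x i * conj (x i) = ((cvecNorm x ^ 2 : ℝ) : ℂ) := by
  rw [cvecNorm_sq]
  push_cast
  refine Finset.sum_congr rfl fun i _ => ?_
  rw [Complex.mul_conj]
  norm_cast
  rw [Complex.normSq_eq_norm_sq]

lemma adjoint_bound {m : ℕ} (A : Matrix (Fin m) (Fin m) ℂ) (K : ℝ) (hK : 0 ≤ K)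
    (h : ∀ b, cvecNorm (A.mulVec b) ≤ K * cvecNorm b) (y : Fin m → ℂ) :
    cvecNorm (A.conjTranspose.mulVec y) ≤ K * cvecNorm y := by
  set z := A.conjTranspose.mulVec y with hz
  have h1 : ∑ i, z i * conj (z i) = ((cvecNorm z ^ 2 : ℝ) : ℂ) := sum_self_conj z
  have h2 : ∑ i, z i * conj (z i) = conj (∑ i, (A.mulVec z) i * conj (y i)) := by
    rw [hz, mulVec_conj_sum]
  have h3 : cvecNorm z ^ 2 ≤ K * cvecNorm z * cvecNorm y := by
    have : cvecNorm z ^ 2 = ‖∑ i, z i * conj (z i)‖ := by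
      rw [h1, Complex.norm_real, Real.norm_eq_abs, abs_of_nonneg (sq_nonneg _)]
    rw [this, h2, RCLike.norm_conj]
    calc ‖∑ i, (A.mulVec z) i * conj (y i)‖ ≤ cvecNorm (A.mulVec z) * cvecNorm y :=
          cvecNorm_CS _ _
      _ ≤ K * cvecNorm z * cvecNorm y :=
          mul_le_mul_of_nonneg_right (h z) (cvecNorm_nonneg y)
  rcases eq_or_lt_of_le (cvecNorm_nonneg z) with h0 | h0
  · rw [← h0]; exact mul_nonneg hK (cvecNorm_nonneg y)
  · have := (mul_le_mul_iff_left₀ h0).mp (by rw [← sq]; linarith [h3] : cvecNorm z * cvecNorm z ≤ (K * cvecNorm y) * cvecNorm z)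
    exact this

lemma cvecNorm_eq_zero {m : ℕ} {b : Fin m → ℂ} (h : cvecNorm b = 0) : b = 0 := by
  rw [cvecNorm_eq_norm, norm_eq_zero] at h
  have := congrArg (WithLp.equiv 2 (Fin m → ℂ)) h
  simpa using this

lemma re_le_cvec_CS {m : ℕ} (x y : Fin m → ℂ) :
    (∑ i, x i * conj (y i)).re ≤ cvecNorm x * cvecNorm y := by
  calc (∑ i, x i * conj (y i)).re ≤ |(∑ i, x i * conj (y i)).re| := le_abs_self _
    _ ≤ ‖∑ i, x i * conj (y i)‖ := by
        exact Complex.abs_re_le_norm _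
    _ ≤ _ := cvecNorm_CS x y

/-- The symbol `p(ξ) = N(ξ)* o(ξ) − 2πiγξ₁ I` with
`o(ξ) = diag(d₁,…,d_m) + 4π²|ξ|² diag(σ₁,…,σ_m)`. -/
noncomputable def surfSymb {m dd : ℕ} (hdd : 0 < dd) (γ : ℝ) (dvec σvec : Fin m → ℝ)
    (N : EuclideanSpace ℝ (Fin dd) → Matrix (Fin m) (Fin m) ℂ)
    (ξ : EuclideanSpace ℝ (Fin dd)) : Matrix (Fin m) (Fin m) ℂ :=
  (N ξ).conjTranspose * Matrix.diagonal
      (fun ℓ => ((dvec ℓ : ℝ) : ℂ) + ((4 * Real.pi ^ 2 * ‖ξ‖ ^ 2 * σvec ℓ : ℝ) : ℂ))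
    - (((2 * Real.pi * γ * ξ ⟨0, hdd⟩ : ℝ) : ℂ) * Complex.I) • 1

set_option maxHeartbeats 3200000 in
/-- Two-sided estimate for the symbol `p(ξ) = n(ξ)* o(ξ) − 2πiγξ₁I`
built from a symbol field `n` satisfying the normal-stress-to-normal-Dirichlet bounds,
strictly positive `d_ℓ` (gravity terms) and strictly positive surface tensions `σ_ℓ`:
`C⁻¹|p(ξ)b|² ≤ [(ξ₁²+|ξ|⁴)𝟙_{|ξ|≤1} + |ξ|²𝟙_{|ξ|>1}]|b|² ≤ C|p(ξ)b|²`, and in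
particular `p(ξ)` is invertible for `ξ ≠ 0`. -/
theorem stmt_12 (m dd : ℕ) (hm : 1 ≤ m) (hdd : 0 < dd) (γ c : ℝ) (hγ : γ ≠ 0)
    (hc : 0 < c) (dvec σvec : Fin m → ℝ) (hd : ∀ ℓ, 0 < dvec ℓ) (hσ : ∀ ℓ, 0 < σvec ℓ) :
    ∃ C : ℝ, 0 < C ∧
      ∀ (N : EuclideanSpace ℝ (Fin dd) → Matrix (Fin m) (Fin m) ℂ)
        (ξ : EuclideanSpace ℝ (Fin dd)),
        (∀ b : Fin m → ℂ,
          cvecNorm ((N ξ).mulVec b) ≤ c * min (‖ξ‖ ^ 2) ‖ξ‖⁻¹ * cvecNorm b) →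
        (∀ a : Fin m → ℂ,
          c⁻¹ * min (‖ξ‖ ^ 2) ‖ξ‖⁻¹ * cvecNorm a ^ 2 ≤
            (∑ i, (N ξ).mulVec a i * conj (a i)).re) →
        (∀ b : Fin m → ℂ,
          C⁻¹ * cvecNorm ((surfSymb hdd γ dvec σvec N ξ).mulVec b) ^ 2 ≤
              (if ‖ξ‖ ≤ 1 then (ξ ⟨0, hdd⟩) ^ 2 + ‖ξ‖ ^ 4 else ‖ξ‖ ^ 2) * cvecNorm b ^ 2 ∧
            (if ‖ξ‖ ≤ 1 then (ξ ⟨0, hdd⟩) ^ 2 + ‖ξ‖ ^ 4 else ‖ξ‖ ^ 2) * cvecNorm b ^ 2 ≤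
              C * cvecNorm ((surfSymb hdd γ dvec σvec N ξ).mulVec b) ^ 2) ∧
          (ξ ≠ 0 → IsUnit (surfSymb hdd γ dvec σvec N ξ)) := by
  haveI : Nonempty (Fin m) := ⟨⟨0, hm⟩⟩
  obtain ⟨π, hπdef⟩ : ∃ r : ℝ, r = Real.pi := ⟨_, rfl⟩
  have hπ : 0 < π := hπdef ▸ Real.pi_pos
  obtain ⟨Dmin, hDmin_mem, hDmin⟩ : ∃ r, (∃ ℓ, dvec ℓ = r) ∧ ∀ ℓ, r ≤ dvec ℓ := by
    obtain ⟨ℓ0, -, h0⟩ := Finset.exists_min_image Finset.univ dvec ⟨Classical.arbitrary _, Finset.mem_univ _⟩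
    exact ⟨dvec ℓ0, ⟨ℓ0, rfl⟩, fun ℓ => h0 ℓ (Finset.mem_univ ℓ)⟩
  obtain ⟨Dmax, -, hDmax⟩ : ∃ r, (∃ ℓ, dvec ℓ = r) ∧ ∀ ℓ, dvec ℓ ≤ r := by
    obtain ⟨ℓ0, -, h0⟩ := Finset.exists_max_image Finset.univ dvec ⟨Classical.arbitrary _, Finset.mem_univ _⟩
    exact ⟨dvec ℓ0, ⟨ℓ0, rfl⟩, fun ℓ => h0 ℓ (Finset.mem_univ ℓ)⟩
  obtain ⟨Smin, hSmin_mem, hSmin⟩ : ∃ r, (∃ ℓ, σvec ℓ = r) ∧ ∀ ℓ, r ≤ σvec ℓ := by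
    obtain ⟨ℓ0, -, h0⟩ := Finset.exists_min_image Finset.univ σvec ⟨Classical.arbitrary _, Finset.mem_univ _⟩
    exact ⟨σvec ℓ0, ⟨ℓ0, rfl⟩, fun ℓ => h0 ℓ (Finset.mem_univ ℓ)⟩
  obtain ⟨Smax, -, hSmax⟩ : ∃ r, (∃ ℓ, σvec ℓ = r) ∧ ∀ ℓ, σvec ℓ ≤ r := by
    obtain ⟨ℓ0, -, h0⟩ := Finset.exists_max_image Finset.univ σvec ⟨Classical.arbitrary _, Finset.mem_univ _⟩
    exact ⟨σvec ℓ0, ⟨ℓ0, rfl⟩, fun ℓ => h0 ℓ (Finset.mem_univ ℓ)⟩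
  have hDmin0 : 0 < Dmin := by obtain ⟨ℓ, hℓ⟩ := hDmin_mem; rw [← hℓ]; exact hd ℓ
  have hSmin0 : 0 < Smin := by obtain ⟨ℓ, hℓ⟩ := hSmin_mem; rw [← hℓ]; exact hσ ℓ
  have hDmax0 : 0 < Dmax := lt_of_lt_of_le hDmin0 (le_trans (hDmin _) (hDmax (Classical.arbitrary _)))
  have hSmax0 : 0 < Smax := lt_of_lt_of_le hSmin0 (le_trans (hSmin _) (hSmax (Classical.arbitrary _)))
  obtain ⟨c1, hc1def⟩ : ∃ r : ℝ, r = c * (Dmax + 4 * π ^ 2 * Smax) := ⟨_, rfl⟩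
  obtain ⟨c2, hc2def⟩ : ∃ r : ℝ, r = 2 * π * |γ| := ⟨_, rfl⟩
  have hc1 : 0 < c1 := by
    rw [hc1def]
    have : 0 < Dmax + 4 * π ^ 2 * Smax := by positivity
    positivity
  have hc2 : 0 < c2 := by
    rw [hc2def]
    have : 0 < |γ| := abs_pos.mpr hγ
    positivity
  obtain ⟨C, hCdef⟩ : ∃ r : ℝ, r = 2 * c1 ^ 2 + 2 * c2 ^ 2 + (c1 + c2) ^ 2 + (c / Dmin) ^ 2
      + ((1 + c1 * c / Dmin) / c2) ^ 2 + (c / (4 * π ^ 2 * Smin)) ^ 2 + 1 := ⟨_, rfl⟩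
  have hC : 0 < C := by rw [hCdef]; positivity
  refine ⟨C, hC, ?_⟩
  intro N ξ hN1 hN2
  set X : ℝ := ‖ξ‖ with hXdef
  set x1 : ℝ := ξ ⟨0, hdd⟩ with hx1def
  set M : ℝ := min (X ^ 2) X⁻¹ with hMdef
  have hX0 : 0 ≤ X := norm_nonneg _
  have hM0 : 0 ≤ M := le_min (sq_nonneg _) (inv_nonneg.mpr hX0)
  have hx1X : |x1| ≤ X := by
    have h1 : x1 ^ 2 ≤ ∑ i, ‖ξ i‖ ^ 2 := by
      have : x1 ^ 2 = ‖ξ ⟨0, hdd⟩‖ ^ 2 := by rw [Real.norm_eq_abs, sq_abs]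
      rw [this]
      exact Finset.single_le_sum (f := fun i => ‖ξ i‖ ^ 2) (fun i _ => sq_nonneg _)
        (Finset.mem_univ _)
    calc |x1| = Real.sqrt (x1 ^ 2) := (Real.sqrt_sq_eq_abs _).symm
      _ ≤ Real.sqrt (∑ i, ‖ξ i‖ ^ 2) := Real.sqrt_le_sqrt h1
      _ = X := by rw [hXdef, EuclideanSpace.norm_eq]
  set A : Matrix (Fin m) (Fin m) ℂ := N ξ with hAdef
  set w : Fin m → ℝ := fun ℓ => dvec ℓ + 4 * π ^ 2 * X ^ 2 * σvec ℓ with hwdef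
  set k : ℂ := ((2 * π * γ * x1 : ℝ) : ℂ) * Complex.I with hkdef
  set P : Matrix (Fin m) (Fin m) ℂ := surfSymb hdd γ dvec σvec N ξ with hPdef
  have hknorm : ‖k‖ = c2 * |x1| := by
    rw [hkdef, norm_mul, Complex.norm_I, mul_one, Complex.norm_real, Real.norm_eq_abs,
      hc2def]
    rw [abs_mul, abs_mul, abs_mul]
    have : |(2:ℝ)| = 2 := by norm_num
    rw [this, abs_of_pos hπ]
  have hPb : ∀ b : Fin m → ℂ,
      P.mulVec b = A.conjTranspose.mulVec (fun i => (w i : ℂ) * b i) - fun i => k * b i := by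
    intro b
    rw [hPdef]
    unfold surfSymb
    rw [Matrix.sub_mulVec, ← Matrix.mulVec_mulVec]
    have h1 : (Matrix.diagonal fun ℓ => ((dvec ℓ : ℝ) : ℂ)
        + ((4 * Real.pi ^ 2 * ‖ξ‖ ^ 2 * σvec ℓ : ℝ) : ℂ)).mulVec b
        = fun i => (w i : ℂ) * b i := by
      funext i
      rw [Matrix.mulVec_diagonal]
      congr 1
      rw [hwdef, ← hXdef, ← hπdef]
      push_cast
      ring
    have h2 : ((((2 * Real.pi * γ * ξ ⟨0, hdd⟩ : ℝ) : ℂ) * Complex.I) • (1 : Matrix (Fin m) (Fin m) ℂ)).mulVec b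
        = fun i => k * b i := by
      rw [Matrix.smul_mulVec, Matrix.one_mulVec, hkdef, ← hx1def, ← hπdef]
      rfl
    rw [h1, h2, ← hAdef]
  -- bounds on w
  have hq0 : (0:ℝ) ≤ 4 * π ^ 2 * X ^ 2 := by positivity
  have hwlo : ∀ i, Dmin ≤ w i := by
    intro i
    have h1 : 0 ≤ 4 * π ^ 2 * X ^ 2 * σvec i := mul_nonneg hq0 (hσ i).le
    have h2 := hDmin i
    simp only [hwdef]
    linarith
  have hwlo2 : ∀ i, 4 * π ^ 2 * Smin * X ^ 2 ≤ w i := by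
    intro i
    have h2 := (hd i).le
    have h3 : 4 * π ^ 2 * Smin * X ^ 2 ≤ 4 * π ^ 2 * X ^ 2 * σvec i := by
      calc 4 * π ^ 2 * Smin * X ^ 2 = 4 * π ^ 2 * X ^ 2 * Smin := by ring
        _ ≤ 4 * π ^ 2 * X ^ 2 * σvec i := mul_le_mul_of_nonneg_left (hSmin i) hq0
    simp only [hwdef]; linarith
  have hwhi : ∀ i, |w i| ≤ Dmax + 4 * π ^ 2 * Smax * X ^ 2 := by
    intro i
    have h0 : 0 < w i := lt_of_lt_of_le hDmin0 (hwlo i)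
    rw [abs_of_pos h0]
    have h1 := hDmax i
    have h3 : 4 * π ^ 2 * X ^ 2 * σvec i ≤ 4 * π ^ 2 * Smax * X ^ 2 := by
      calc 4 * π ^ 2 * X ^ 2 * σvec i ≤ 4 * π ^ 2 * X ^ 2 * Smax :=
            mul_le_mul_of_nonneg_left (hSmax i) hq0
        _ = 4 * π ^ 2 * Smax * X ^ 2 := by ring
    simp only [hwdef]; linarith
  -- C dominates each constant
  have hCa : 2 * c1 ^ 2 ≤ C := by
    rw [hCdef]
    linarith [sq_nonneg c2, sq_nonneg (c1 + c2), sq_nonneg (c / Dmin),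
      sq_nonneg ((1 + c1 * c / Dmin) / c2), sq_nonneg (c / (4 * π ^ 2 * Smin))]
  have hCb : 2 * c2 ^ 2 ≤ C := by
    rw [hCdef]
    linarith [sq_nonneg c1, sq_nonneg (c1 + c2), sq_nonneg (c / Dmin),
      sq_nonneg ((1 + c1 * c / Dmin) / c2), sq_nonneg (c / (4 * π ^ 2 * Smin))]
  have hCc : (c1 + c2) ^ 2 ≤ C := by
    rw [hCdef]
    linarith [sq_nonneg c1, sq_nonneg c2, sq_nonneg (c / Dmin),
      sq_nonneg ((1 + c1 * c / Dmin) / c2), sq_nonneg (c / (4 * π ^ 2 * Smin))]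
  have hCde : (c / Dmin) ^ 2 + ((1 + c1 * c / Dmin) / c2) ^ 2 ≤ C := by
    rw [hCdef]
    linarith [sq_nonneg c1, sq_nonneg c2, sq_nonneg (c1 + c2),
      sq_nonneg (c / (4 * π ^ 2 * Smin))]
  have hCf : (c / (4 * π ^ 2 * Smin)) ^ 2 ≤ C := by
    rw [hCdef]
    linarith [sq_nonneg c1, sq_nonneg c2, sq_nonneg (c1 + c2), sq_nonneg (c / Dmin),
      sq_nonneg ((1 + c1 * c / Dmin) / c2)]
  -- norms of the diagonal part
  have hDS : (0:ℝ) ≤ Dmax + 4 * π ^ 2 * Smax * X ^ 2 := by positivity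
  have Hob_up : ∀ b : Fin m → ℂ, cvecNorm (fun i => (w i : ℂ) * b i)
      ≤ (Dmax + 4 * π ^ 2 * Smax * X ^ 2) * cvecNorm b :=
    fun b => cvecNorm_diag_le w _ hDS hwhi b
  have Hob_lo1 : ∀ b : Fin m → ℂ, Dmin * cvecNorm b ≤ cvecNorm (fun i => (w i : ℂ) * b i) :=
    fun b => le_cvecNorm_diag w Dmin hDmin0.le hwlo b
  have Hob_lo2 : ∀ b : Fin m → ℂ,
      4 * π ^ 2 * Smin * X ^ 2 * cvecNorm b ≤ cvecNorm (fun i => (w i : ℂ) * b i) :=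
    fun b => le_cvecNorm_diag w _ (by positivity) hwlo2 b
  have hcM : (0:ℝ) ≤ c * M := mul_nonneg hc.le hM0
  have HAd : ∀ v : Fin m → ℂ, cvecNorm (A.conjTranspose.mulVec v) ≤ c * M * cvecNorm v :=
    adjoint_bound A (c * M) hcM hN1
  -- upper bound on |Pb|
  have Hup : ∀ b : Fin m → ℂ, cvecNorm (P.mulVec b)
      ≤ c * M * ((Dmax + 4 * π ^ 2 * Smax * X ^ 2) * cvecNorm b) + c2 * (|x1| * cvecNorm b) := by
    intro b
    rw [hPb b]
    calc cvecNorm ((A.conjTranspose.mulVec fun i => (w i : ℂ) * b i) - fun i => k * b i)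
        ≤ cvecNorm (A.conjTranspose.mulVec fun i => (w i : ℂ) * b i)
          + cvecNorm (fun i => k * b i) := cvecNorm_sub_le _ _
      _ ≤ c * M * ((Dmax + 4 * π ^ 2 * Smax * X ^ 2) * cvecNorm b) + c2 * (|x1| * cvecNorm b) := by
          have e1 : cvecNorm (A.conjTranspose.mulVec fun i => (w i : ℂ) * b i)
              ≤ c * M * ((Dmax + 4 * π ^ 2 * Smax * X ^ 2) * cvecNorm b) :=
            le_trans (HAd _) (mul_le_mul_of_nonneg_left (Hob_up b) hcM)
          have e2 : cvecNorm (fun i => k * b i) = c2 * (|x1| * cvecNorm b) := by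
            rw [cvecNorm_smulfun, hknorm]; ring
          linarith
  -- the reverse triangle inequality for the k-part
  have Hrev : ∀ b : Fin m → ℂ, c2 * (|x1| * cvecNorm b)
      ≤ cvecNorm (P.mulVec b) + c * M * ((Dmax + 4 * π ^ 2 * Smax * X ^ 2) * cvecNorm b) := by
    intro b
    have e0 : (fun i => k * b i)
        = (A.conjTranspose.mulVec fun i => (w i : ℂ) * b i) - P.mulVec b := by
      rw [hPb b, sub_sub_cancel]
    have e2 : cvecNorm (fun i => k * b i) = c2 * (|x1| * cvecNorm b) := by
      rw [cvecNorm_smulfun, hknorm]; ring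
    rw [← e2, e0]
    have e1 : cvecNorm (A.conjTranspose.mulVec fun i => (w i : ℂ) * b i)
        ≤ c * M * ((Dmax + 4 * π ^ 2 * Smax * X ^ 2) * cvecNorm b) :=
      le_trans (HAd _) (mul_le_mul_of_nonneg_left (Hob_up b) hcM)
    have := cvecNorm_sub_le (A.conjTranspose.mulVec fun i => (w i : ℂ) * b i) (P.mulVec b)
    linarith
  -- lower bound via the quadratic form
  have Hlo : ∀ b : Fin m → ℂ,
      c⁻¹ * M * cvecNorm (fun i => (w i : ℂ) * b i) ≤ cvecNorm (P.mulVec b) := by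
    intro b
    set ob : Fin m → ℂ := fun i => (w i : ℂ) * b i with hobdef
    set r : ℝ := ∑ i, w i * ‖b i‖ ^ 2 with hrdef
    have hterm : ∀ i, b i * conj (ob i) = ((w i * ‖b i‖ ^ 2 : ℝ) : ℂ) := by
      intro i
      have : conj (ob i) = (w i : ℂ) * conj (b i) := by
        rw [hobdef]
        simp only [map_mul, Complex.conj_ofReal]
      rw [this, show b i * ((w i : ℂ) * conj (b i)) = (w i : ℂ) * (b i * conj (b i)) from by ring,
        Complex.mul_conj]
      push_cast [Complex.normSq_eq_norm_sq]
      ring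
    have hS : (∑ i, (P.mulVec b) i * conj (ob i))
        = conj (∑ i, (A.mulVec ob) i * conj (ob i)) - k * ((r : ℝ) : ℂ) := by
      rw [hPb b]
      simp only [Pi.sub_apply, sub_mul]
      rw [Finset.sum_sub_distrib, mulVec_conj_sum]
      congr 1
      calc ∑ i, k * b i * conj (ob i) = k * ∑ i, b i * conj (ob i) := by
            rw [Finset.mul_sum]; exact Finset.sum_congr rfl fun i _ => by ring
        _ = k * ((r : ℝ) : ℂ) := by
            congr 1
            rw [hrdef]
            push_cast
            exact Finset.sum_congr rfl fun i _ => by rw [hterm i]; push_cast; ring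
    have hSre : c⁻¹ * M * cvecNorm ob ^ 2 ≤ (∑ i, (P.mulVec b) i * conj (ob i)).re := by
      rw [hS, Complex.sub_re, Complex.conj_re]
      have hk0 : (k * ((r : ℝ) : ℂ)).re = 0 := by
        rw [hkdef]
        simp [Complex.mul_re, Complex.mul_im]
      rw [hk0, sub_zero]
      exact hN2 ob
    have hCS := re_le_cvec_CS (P.mulVec b) ob
    have hkey : c⁻¹ * M * cvecNorm ob ^ 2 ≤ cvecNorm (P.mulVec b) * cvecNorm ob :=
      le_trans hSre hCS
    rcases eq_or_lt_of_le (cvecNorm_nonneg ob) with h0 | h0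
    · rw [← h0, mul_zero]
      exact cvecNorm_nonneg _
    · have : (c⁻¹ * M * cvecNorm ob) * cvecNorm ob ≤ cvecNorm (P.mulVec b) * cvecNorm ob := by
        rw [mul_assoc, ← sq]
        exact hkey
      exact le_of_mul_le_mul_right this h0
  -- main two-sided estimates
  clear_value X x1 M
  have hMle2 : M ≤ X⁻¹ := by rw [hMdef]; exact min_le_right _ _
  have hM1 : X ≤ 1 → M = X ^ 2 := by
    intro hX1
    rw [hMdef]
    apply min_eq_left
    rcases eq_or_lt_of_le hX0 with h | h
    · rw [← h]; norm_num
    · have i1 := mul_inv_cancel₀ (ne_of_gt h)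
      have i2 := mul_nonneg (inv_nonneg.mpr hX0) (sub_nonneg.mpr hX1)
      have i3 := mul_nonneg hX0 (sub_nonneg.mpr hX1)
      have e2 : X⁻¹ * (1 - X) = X⁻¹ - X * X⁻¹ := by ring
      have e3 : X * (1 - X) = X - X ^ 2 := by ring
      rw [e2] at i2
      rw [e3] at i3
      linarith
  have hM2 : 1 < X → M = X⁻¹ := by
    intro hX1
    rw [hMdef]
    apply min_eq_right
    have hXne : X ≠ 0 := by positivity
    have i1 := mul_inv_cancel₀ hXne
    have i2 := mul_nonneg (inv_nonneg.mpr hX0) (sub_nonneg.mpr hX1.le)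
    have e2 : X⁻¹ * (X - 1) = X * X⁻¹ - X⁻¹ := by ring
    rw [e2] at i2
    linarith [sq_nonneg (X - 1)]
  have hX2le : X ≤ 1 → X ^ 2 ≤ 1 := by
    intro hX1
    have := mul_le_mul_of_nonneg_left hX1 hX0
    have e : X * X = X ^ 2 := by ring
    rw [mul_one, e] at this
    linarith
  -- the diagonal coefficient bound for small X
  have h9gen : X ≤ 1 → ∀ t : ℝ, 0 ≤ t →
      c * M * ((Dmax + 4 * π ^ 2 * Smax * X ^ 2) * t) ≤ c1 * (X ^ 2 * t) := by
    intro hX1 t ht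
    rw [hM1 hX1, hc1def]
    have hd1 : Dmax + 4 * π ^ 2 * Smax * X ^ 2 ≤ Dmax + 4 * π ^ 2 * Smax := by
      have := mul_le_mul_of_nonneg_left (hX2le hX1)
        (show (0:ℝ) ≤ 4 * π ^ 2 * Smax by positivity)
      rw [mul_one] at this
      linarith
    calc c * X ^ 2 * ((Dmax + 4 * π ^ 2 * Smax * X ^ 2) * t)
        ≤ c * X ^ 2 * ((Dmax + 4 * π ^ 2 * Smax) * t) := by
          apply mul_le_mul_of_nonneg_left _ (by positivity)
          exact mul_le_mul_of_nonneg_right hd1 ht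
      _ = c * (Dmax + 4 * π ^ 2 * Smax) * (X ^ 2 * t) := by ring
  have key2 : ∀ b : Fin m → ℂ,
      (if X ≤ 1 then x1 ^ 2 + X ^ 4 else X ^ 2) * cvecNorm b ^ 2
        ≤ C * cvecNorm (P.mulVec b) ^ 2 := by
    intro b
    have hnb : 0 ≤ cvecNorm b := cvecNorm_nonneg b
    have hnp : 0 ≤ cvecNorm (P.mulVec b) := cvecNorm_nonneg _
    have hOb1 := Hob_lo1 b
    have hOb2 := Hob_lo2 b
    have hLo := Hlo b
    have hRv := Hrev b
    set nb := cvecNorm b with hnbdef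
    set np := cvecNorm (P.mulVec b) with hnpdef
    clear_value nb np
    by_cases hX1 : X ≤ 1
    · rw [if_pos hX1]
      have hlo' : c⁻¹ * X ^ 2 * (Dmin * nb) ≤ np := by
        have h0 := hLo
        rw [hM1 hX1] at h0
        calc c⁻¹ * X ^ 2 * (Dmin * nb)
            ≤ c⁻¹ * X ^ 2 * cvecNorm (fun i => (w i : ℂ) * b i) :=
              mul_le_mul_of_nonneg_left hOb1 (by positivity)
          _ ≤ np := h0
      have h5 : Dmin * (X ^ 2 * nb) ≤ c * np := by
        have e : c * (c⁻¹ * X ^ 2 * (Dmin * nb)) = Dmin * (X ^ 2 * nb) := by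
          field_simp
        calc Dmin * (X ^ 2 * nb) = c * (c⁻¹ * X ^ 2 * (Dmin * nb)) := e.symm
          _ ≤ c * np := mul_le_mul_of_nonneg_left hlo' hc.le
      have h6 : X ^ 4 * nb ^ 2 ≤ (c / Dmin) ^ 2 * np ^ 2 := by
        have h6' : (Dmin * (X ^ 2 * nb)) ^ 2 ≤ (c * np) ^ 2 :=
          pow_le_pow_left₀ (by positivity) h5 2
        rw [div_pow, div_mul_eq_mul_div, le_div_iff₀ (by positivity : (0:ℝ) < Dmin ^ 2)]
        have e : (Dmin * (X ^ 2 * nb)) ^ 2 = X ^ 4 * nb ^ 2 * Dmin ^ 2 := by ring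
        have e2 : (c * np) ^ 2 = c ^ 2 * np ^ 2 := by ring
        linarith [h6']
      have h10 : X ^ 2 * nb ≤ c / Dmin * np := by
        rw [div_mul_eq_mul_div, le_div_iff₀ hDmin0]
        linarith [h5]
      have h7 : c2 * (|x1| * nb) ≤ (1 + c1 * c / Dmin) * np := by
        have h8 := hRv
        have h9 := h9gen hX1 nb hnb
        have f := mul_le_mul_of_nonneg_left h10 hc1.le
        have e : (1 + c1 * c / Dmin) * np = np + c1 * (c / Dmin * np) := by ring
        linarith
      have h11 : x1 ^ 2 * nb ^ 2 ≤ ((1 + c1 * c / Dmin) / c2) ^ 2 * np ^ 2 := by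
        have h12 : |x1| * nb ≤ (1 + c1 * c / Dmin) / c2 * np := by
          rw [div_mul_eq_mul_div, le_div_iff₀ hc2]
          linarith [h7]
        have h13 : (|x1| * nb) ^ 2 ≤ ((1 + c1 * c / Dmin) / c2 * np) ^ 2 :=
          pow_le_pow_left₀ (by positivity) h12 2
        have e : (|x1| * nb) ^ 2 = |x1| ^ 2 * nb ^ 2 := by ring
        have e2 : |x1| ^ 2 * nb ^ 2 = x1 ^ 2 * nb ^ 2 := by rw [sq_abs]
        have e3 : ((1 + c1 * c / Dmin) / c2 * np) ^ 2
            = ((1 + c1 * c / Dmin) / c2) ^ 2 * np ^ 2 := by ring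
        linarith
      have g := mul_le_mul_of_nonneg_right hCde (sq_nonneg np)
      have e : (x1 ^ 2 + X ^ 4) * nb ^ 2 = x1 ^ 2 * nb ^ 2 + X ^ 4 * nb ^ 2 := by ring
      have e2 : ((c / Dmin) ^ 2 + ((1 + c1 * c / Dmin) / c2) ^ 2) * np ^ 2
          = (c / Dmin) ^ 2 * np ^ 2 + ((1 + c1 * c / Dmin) / c2) ^ 2 * np ^ 2 := by ring
      linarith
    · push_neg at hX1
      rw [if_neg (not_le.mpr hX1)]
      have hXpos : (0:ℝ) < X := lt_trans one_pos hX1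
      have hXne : X ≠ 0 := ne_of_gt hXpos
      have hlo' : c⁻¹ * (4 * π ^ 2 * Smin) * (X * nb) ≤ np := by
        have h0 := hLo
        rw [hM2 hX1] at h0
        have e : c⁻¹ * (4 * π ^ 2 * Smin) * (X * nb)
            = c⁻¹ * X⁻¹ * (4 * π ^ 2 * Smin * X ^ 2 * nb) := by
          field_simp
        rw [e]
        calc c⁻¹ * X⁻¹ * (4 * π ^ 2 * Smin * X ^ 2 * nb)
            ≤ c⁻¹ * X⁻¹ * cvecNorm (fun i => (w i : ℂ) * b i) := by
              apply mul_le_mul_of_nonneg_left _ (by positivity)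
              exact hOb2
          _ ≤ np := h0
      have h10 : X * nb ≤ c / (4 * π ^ 2 * Smin) * np := by
        rw [div_mul_eq_mul_div, le_div_iff₀ (by positivity : (0:ℝ) < 4 * π ^ 2 * Smin)]
        have f := mul_le_mul_of_nonneg_left hlo' hc.le
        have e : c * (c⁻¹ * (4 * π ^ 2 * Smin) * (X * nb))
            = X * nb * (4 * π ^ 2 * Smin) := by
          field_simp
        linarith
      have h13 : (X * nb) ^ 2 ≤ (c / (4 * π ^ 2 * Smin) * np) ^ 2 :=
        pow_le_pow_left₀ (by positivity) h10 2
      have g := mul_le_mul_of_nonneg_right hCf (sq_nonneg np)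
      have e : (X * nb) ^ 2 = X ^ 2 * nb ^ 2 := by ring
      have e2 : (c / (4 * π ^ 2 * Smin) * np) ^ 2
          = (c / (4 * π ^ 2 * Smin)) ^ 2 * np ^ 2 := by ring
      linarith
  have key1 : ∀ b : Fin m → ℂ,
      C⁻¹ * cvecNorm (P.mulVec b) ^ 2
        ≤ (if X ≤ 1 then x1 ^ 2 + X ^ 4 else X ^ 2) * cvecNorm b ^ 2 := by
    intro b
    have hnb : 0 ≤ cvecNorm b := cvecNorm_nonneg b
    have hnp : 0 ≤ cvecNorm (P.mulVec b) := cvecNorm_nonneg _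
    have hup := Hup b
    set nb := cvecNorm b with hnbdef
    set np := cvecNorm (P.mulVec b) with hnpdef
    clear_value nb np
    rw [inv_mul_le_iff₀ hC]
    by_cases hX1 : X ≤ 1
    · rw [if_pos hX1]
      have h9 := h9gen hX1 nb hnb
      have hup' : np ≤ c1 * (X ^ 2 * nb) + c2 * (|x1| * nb) := by linarith
      have f1 : np * np ≤ (c1 * (X ^ 2 * nb) + c2 * (|x1| * nb))
          * (c1 * (X ^ 2 * nb) + c2 * (|x1| * nb)) :=
        mul_self_le_mul_self hnp hup'
      have f2 := sq_nonneg (c1 * (X ^ 2 * nb) - c2 * (|x1| * nb))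
      have f3 : c2 ^ 2 * (|x1| ^ 2 * nb ^ 2) = c2 ^ 2 * (x1 ^ 2 * nb ^ 2) := by
        rw [sq_abs]
      have hsq : np ^ 2 ≤ 2 * c1 ^ 2 * (X ^ 4 * nb ^ 2) + 2 * c2 ^ 2 * (x1 ^ 2 * nb ^ 2) := by
        have e1 : (c1 * (X ^ 2 * nb) + c2 * (|x1| * nb))
            * (c1 * (X ^ 2 * nb) + c2 * (|x1| * nb))
            = c1 ^ 2 * (X ^ 4 * nb ^ 2) + 2 * (c1 * c2 * (X ^ 2 * (|x1| * nb ^ 2)))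
              + c2 ^ 2 * (|x1| ^ 2 * nb ^ 2) := by ring
        have e2 : (c1 * (X ^ 2 * nb) - c2 * (|x1| * nb)) ^ 2
            = c1 ^ 2 * (X ^ 4 * nb ^ 2) - 2 * (c1 * c2 * (X ^ 2 * (|x1| * nb ^ 2)))
              + c2 ^ 2 * (|x1| ^ 2 * nb ^ 2) := by ring
        have e3 : np * np = np ^ 2 := by ring
        linarith
      have hA : (0:ℝ) ≤ X ^ 4 * nb ^ 2 := by positivity
      have hB : (0:ℝ) ≤ x1 ^ 2 * nb ^ 2 := by positivity
      have gA := mul_le_mul_of_nonneg_right hCa hA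
      have gB := mul_le_mul_of_nonneg_right hCb hB
      have e4 : C * ((x1 ^ 2 + X ^ 4) * nb ^ 2)
          = C * (x1 ^ 2 * nb ^ 2) + C * (X ^ 4 * nb ^ 2) := by ring
      linarith
    · push_neg at hX1
      have hXpos : (0:ℝ) < X := lt_trans one_pos hX1
      have hXne : X ≠ 0 := ne_of_gt hXpos
      rw [if_neg (not_le.mpr hX1)]
      have hXinvle : X⁻¹ ≤ 1 := by
        have i1 := mul_inv_cancel₀ hXne
        have i2 := mul_nonneg (inv_nonneg.mpr hX0) (sub_nonneg.mpr hX1.le)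
        have e2 : X⁻¹ * (X - 1) = X * X⁻¹ - X⁻¹ := by ring
        rw [e2] at i2
        linarith
      have e : c * X⁻¹ * ((Dmax + 4 * π ^ 2 * Smax * X ^ 2) * nb)
          = c * Dmax * (X⁻¹ * nb) + c * (4 * π ^ 2 * Smax) * (X * nb) := by
        field_simp
      have hMub : c * M * ((Dmax + 4 * π ^ 2 * Smax * X ^ 2) * nb)
          ≤ c * X⁻¹ * ((Dmax + 4 * π ^ 2 * Smax * X ^ 2) * nb) := by
        have h0 : (0:ℝ) ≤ (Dmax + 4 * π ^ 2 * Smax * X ^ 2) * nb := mul_nonneg hDS hnb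
        exact mul_le_mul_of_nonneg_right (mul_le_mul_of_nonneg_left hMle2 hc.le) h0
      have hx1b : c2 * (|x1| * nb) ≤ c2 * (X * nb) := by
        apply mul_le_mul_of_nonneg_left _ hc2.le
        exact mul_le_mul_of_nonneg_right hx1X hnb
      have hinv : X⁻¹ * nb ≤ X * nb := by
        apply mul_le_mul_of_nonneg_right _ hnb
        linarith
      have h2 : c * Dmax * (X⁻¹ * nb) ≤ c * Dmax * (X * nb) :=
        mul_le_mul_of_nonneg_left hinv (by positivity)
      have hup' : np ≤ (c1 + c2) * (X * nb) := by
        have e5 : (c1 + c2) * (X * nb) = c1 * (X * nb) + c2 * (X * nb) := by ring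
        have e6 : c1 * (X * nb) = c * Dmax * (X * nb) + c * (4 * π ^ 2 * Smax) * (X * nb) := by
          rw [hc1def]; ring
        linarith
      have h13 : np ^ 2 ≤ ((c1 + c2) * (X * nb)) ^ 2 := pow_le_pow_left₀ hnp hup' 2
      have hA : (0:ℝ) ≤ X ^ 2 * nb ^ 2 := by positivity
      have g := mul_le_mul_of_nonneg_right hCc hA
      have e7 : ((c1 + c2) * (X * nb)) ^ 2 = (c1 + c2) ^ 2 * (X ^ 2 * nb ^ 2) := by ring
      linarith
  refine ⟨fun b => ⟨key1 b, key2 b⟩, ?_⟩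
  intro hξ0
  rw [hPdef] at key2 ⊢
  apply Matrix.mulVec_injective_iff_isUnit.mp
  intro u v huv
  have h0 : (surfSymb hdd γ dvec σvec N ξ).mulVec (u - v) = 0 := by
    rw [Matrix.mulVec_sub, huv, sub_self]
  have hnp0 : cvecNorm ((surfSymb hdd γ dvec σvec N ξ).mulVec (u - v)) = 0 := by
    rw [h0]
    unfold cvecNorm
    simp
  have h1 := key2 (u - v)
  rw [hnp0] at h1
  have h1' : (if X ≤ 1 then x1 ^ 2 + X ^ 4 else X ^ 2) * cvecNorm (u - v) ^ 2 ≤ 0 := by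
    simpa using h1
  have hXpos : (0:ℝ) < X := by
    rw [hXdef]
    exact norm_pos_iff.mpr hξ0
  have hRpos : (0:ℝ) < (if X ≤ 1 then x1 ^ 2 + X ^ 4 else X ^ 2) := by
    by_cases hX1 : X ≤ 1
    · rw [if_pos hX1]
      linarith [pow_pos hXpos 4, sq_nonneg x1]
    · rw [if_neg hX1]
      positivity
  have h4 : (if X ≤ 1 then x1 ^ 2 + X ^ 4 else X ^ 2) * cvecNorm (u - v) ^ 2 = 0 :=
    le_antisymm h1' (mul_nonneg hRpos.le (sq_nonneg _))
  have h5 := (mul_eq_zero.mp h4).resolve_left (ne_of_gt hRpos)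
  have h6 : cvecNorm (u - v) = 0 := pow_eq_zero_iff (n := 2) (by norm_num) |>.mp h5
  exact sub_eq_zero.mp (cvecNorm_eq_zero h6)
end

section
/- Let 0 < a₁ < ... < a_m with a₀ = 0, set Ω_ℓ = ℝ^{n-1} × (a_{ℓ-1}, a_ℓ), Ω = ∪Ω_ℓ, Σ_ℓ = ℝ^{n-1} × {a_ℓ}. Let u ∈ H¹(ℝ^{n-1} × (0,a_m); ℝⁿ) with vanishing trace on ℝ^{n-1}×{0}, and let η₁,...,η_m be C¹ functions satisfying the uniform separation condition max ‖η_ℓ‖_{C⁰} ≤ (1/2)min{a₁,...,a_m−a_{m-1}} and with J, 𝒜 the layerwise Jacobian and geometry matrix built from them. Then for each ℓ ∈ {1,...,m}: ∫₀^{a_ℓ} (J 𝒜∇)·u dy = u·𝒩_ℓ(·, a_ℓ) + ∇_∥ · ∫₀^{a_ℓ} J 𝒜ᵀ u dy, where 𝒩_ℓ = (−∇η_ℓ, 1) and (𝒜∇)·u denotes the 𝒜-divergence ∑_{i,j} 𝒜_{ij} ∂_j (u·e_i). -/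
open MeasureTheory
open scoped RealInnerProductSpace

variable {d : ℕ}

/-- The flattened divergence `J (𝒜∇)·u` of a vector field `u` on `ℝ^{n-1} × ℝ`
(horizontal component in `ℝ^{n-1}`, vertical component scalar), where `J` is the
layerwise Jacobian, `Bv` the layerwise vector `(a_ℓ−y)∇η_{ℓ-1} + (y−a_{ℓ-1})∇η_ℓ`,
`δf` the layerwise quantity `a_ℓ+η_ℓ−a_{ℓ-1}−η_{ℓ-1}`, and `Δf` the layerwise width
`a_ℓ − a_{ℓ-1}`. -/
noncomputable def flatDiv (u : EuclideanSpace ℝ (Fin d) × ℝ → EuclideanSpace ℝ (Fin d) × ℝ)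
    (J δf : EuclideanSpace ℝ (Fin d) × ℝ → ℝ) (Δf : ℝ → ℝ)
    (Bv : EuclideanSpace ℝ (Fin d) × ℝ → EuclideanSpace ℝ (Fin d))
    (p : EuclideanSpace ℝ (Fin d) × ℝ) : ℝ :=
  J p * ((∑ i, (fderiv ℝ (fun q => (u q).1 i) p
        ((EuclideanSpace.single i 1 : EuclideanSpace ℝ (Fin d)), (0 : ℝ))
      - (Bv p i / δf p) * fderiv ℝ (fun q => (u q).1 i) p
        ((0 : EuclideanSpace ℝ (Fin d)), (1 : ℝ))))
    + (Δf p.2 / δf p) * fderiv ℝ (fun q => (u q).2) p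
        ((0 : EuclideanSpace ℝ (Fin d)), (1 : ℝ)))


lemma ae_imp_uIoc {c₁ c₂ : ℝ} (hc : c₁ ≤ c₂) {f g : ℝ → ℝ}
    (h : ∀ y ∈ Set.Ioo c₁ c₂, f y = g y) :
    ∀ᵐ y ∂(volume : Measure ℝ), y ∈ Set.uIoc c₁ c₂ → f y = g y := by
  have h2 : ∀ᵐ y ∂(volume : Measure ℝ), y ≠ c₂ := by
    rw [MeasureTheory.ae_iff]
    simp
  filter_upwards [h2] with y hy hmem
  rw [Set.uIoc_of_le hc] at hmem
  exact h y ⟨hmem.1, lt_of_le_of_ne hmem.2 hy⟩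

lemma fderiv_single' (f : EuclideanSpace ℝ (Fin d) → ℝ) (x : EuclideanSpace ℝ (Fin d)) (i : Fin d) :
    fderiv ℝ f x (EuclideanSpace.single i 1) = gradient f x i := by
  have h1 : ⟪gradient f x, EuclideanSpace.single i 1⟫ = fderiv ℝ f x (EuclideanSpace.single i 1) := by
    unfold gradient
    exact InnerProductSpace.toDual_symm_apply
  rw [← h1, EuclideanSpace.inner_single_right]
  simp

lemma hasDerivAt_slice (f : EuclideanSpace ℝ (Fin d) × ℝ → ℝ) (hf : ContDiff ℝ 1 f)
    (x : EuclideanSpace ℝ (Fin d)) (y : ℝ) :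
    HasDerivAt (fun t => f (x, t)) (fderiv ℝ f (x, y) (0, 1)) y := by
  have h1 : HasDerivAt (fun t : ℝ => ((x : EuclideanSpace ℝ (Fin d)), t)) (0, (1:ℝ)) y :=
    (hasDerivAt_const y x).prodMk (hasDerivAt_id y)
  exact ((hf.differentiable one_ne_zero (x, y)).hasFDerivAt).comp_hasDerivAt y h1

lemma hasFDerivAt_sliceX (f : EuclideanSpace ℝ (Fin d) × ℝ → ℝ) (hf : ContDiff ℝ 1 f)
    (x : EuclideanSpace ℝ (Fin d)) (y : ℝ) :
    HasFDerivAt (fun x' => f (x', y))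
      ((fderiv ℝ f (x, y)).comp (ContinuousLinearMap.inl ℝ (EuclideanSpace ℝ (Fin d)) ℝ)) x := by
  have h1 : HasFDerivAt (fun x' : EuclideanSpace ℝ (Fin d) => (x', y))
      (ContinuousLinearMap.inl ℝ (EuclideanSpace ℝ (Fin d)) ℝ) x :=
    (hasFDerivAt_id x).prodMk (hasFDerivAt_const y x)
  exact ((hf.differentiable one_ne_zero (x, y)).hasFDerivAt).comp x h1

variable {d : ℕ}

noncomputable def layerJ (c₁ c₂ : ℝ) (η₁ η₂ : EuclideanSpace ℝ (Fin d) → ℝ)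
    (x' : EuclideanSpace ℝ (Fin d)) : ℝ :=
  (c₂ + η₂ x' - c₁ - η₁ x') / (c₂ - c₁)

noncomputable def layerDeriv (c₁ c₂ : ℝ) (η₁ η₂ : EuclideanSpace ℝ (Fin d) → ℝ)
    (u : EuclideanSpace ℝ (Fin d) × ℝ → EuclideanSpace ℝ (Fin d) × ℝ) (i : Fin d)
    (x' : EuclideanSpace ℝ (Fin d)) (t : ℝ) : EuclideanSpace ℝ (Fin d) →L[ℝ] ℝ :=
  layerJ c₁ c₂ η₁ η₂ x' •
      ((fderiv ℝ (fun q => (u q).1 i) (x', t)).comp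
        (ContinuousLinearMap.inl ℝ (EuclideanSpace ℝ (Fin d)) ℝ))
    + (u (x', t)).1 i • ((c₂ - c₁)⁻¹ • (fderiv ℝ η₂ x' - fderiv ℝ η₁ x'))

lemma contDiff_u1 {u : EuclideanSpace ℝ (Fin d) × ℝ → EuclideanSpace ℝ (Fin d) × ℝ}
    (hu : ContDiff ℝ 1 u) (i : Fin d) : ContDiff ℝ 1 (fun q => (u q).1 i) :=
  contDiff_euclidean.mp hu.fst i

lemma layerJ_contDiff (c₁ c₂ : ℝ) {η₁ η₂ : EuclideanSpace ℝ (Fin d) → ℝ}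
    (h1 : ContDiff ℝ 1 η₁) (h2 : ContDiff ℝ 1 η₂) : ContDiff ℝ 1 (layerJ c₁ c₂ η₁ η₂) :=
  (((contDiff_const.add h2).sub contDiff_const).sub h1).div_const _

lemma layerJ_hasFDerivAt (c₁ c₂ : ℝ) {η₁ η₂ : EuclideanSpace ℝ (Fin d) → ℝ}
    (h1 : ContDiff ℝ 1 η₁) (h2 : ContDiff ℝ 1 η₂) (x' : EuclideanSpace ℝ (Fin d)) :
    HasFDerivAt (layerJ c₁ c₂ η₁ η₂) ((c₂ - c₁)⁻¹ • (fderiv ℝ η₂ x' - fderiv ℝ η₁ x')) x' := by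
  have e2 := (h2.differentiable one_ne_zero x').hasFDerivAt
  have e1 := (h1.differentiable one_ne_zero x').hasFDerivAt
  have hδ : HasFDerivAt (fun x' => c₂ + η₂ x' - c₁ - η₁ x')
      (fderiv ℝ η₂ x' - fderiv ℝ η₁ x') x' := ((e2.const_add c₂).sub_const c₁).sub e1
  have := hδ.mul_const ((c₂ - c₁)⁻¹)
  refine this.congr_of_eventuallyEq (Filter.Eventually.of_forall fun z => ?_)
  rw [layerJ, div_eq_mul_inv]

lemma layerDeriv_hasFDerivAt (c₁ c₂ : ℝ) {η₁ η₂ : EuclideanSpace ℝ (Fin d) → ℝ}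
    (h1 : ContDiff ℝ 1 η₁) (h2 : ContDiff ℝ 1 η₂)
    {u : EuclideanSpace ℝ (Fin d) × ℝ → EuclideanSpace ℝ (Fin d) × ℝ}
    (hu : ContDiff ℝ 1 u) (i : Fin d) (x' : EuclideanSpace ℝ (Fin d)) (t : ℝ) :
    HasFDerivAt (fun z => layerJ c₁ c₂ η₁ η₂ z * (u (z, t)).1 i)
      (layerDeriv c₁ c₂ η₁ η₂ u i x' t) x' := by
  have hmul := (layerJ_hasFDerivAt c₁ c₂ h1 h2 x').mul
    (hasFDerivAt_sliceX (fun q => (u q).1 i) (contDiff_u1 hu i) x' t)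
  unfold layerDeriv
  exact hmul

lemma layerDeriv_cont (c₁ c₂ : ℝ) {η₁ η₂ : EuclideanSpace ℝ (Fin d) → ℝ}
    (h1 : ContDiff ℝ 1 η₁) (h2 : ContDiff ℝ 1 η₂)
    {u : EuclideanSpace ℝ (Fin d) × ℝ → EuclideanSpace ℝ (Fin d) × ℝ}
    (hu : ContDiff ℝ 1 u) (i : Fin d) :
    Continuous fun p : EuclideanSpace ℝ (Fin d) × ℝ => layerDeriv c₁ c₂ η₁ η₂ u i p.1 p.2 := by
  have hJc : Continuous (layerJ c₁ c₂ η₁ η₂) := (layerJ_contDiff c₁ c₂ h1 h2).continuous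
  have hu1 : ContDiff ℝ 1 (fun q => (u q).1 i) := contDiff_u1 hu i
  have hfd : Continuous (fderiv ℝ (fun q => (u q).1 i)) := hu1.continuous_fderiv one_ne_zero
  have hfd2 : Continuous (fderiv ℝ η₂) := h2.continuous_fderiv one_ne_zero
  have hfd1 : Continuous (fderiv ℝ η₁) := h1.continuous_fderiv one_ne_zero
  unfold layerDeriv
  exact ((hJc.comp continuous_fst).smul (hfd.clm_comp continuous_const)).add
    (hu1.continuous.smul (
      (((hfd2.comp continuous_fst).sub (hfd1.comp continuous_fst))).const_smul (c₂ - c₁)⁻¹))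

lemma layer_hasFDerivAt (c₁ c₂ : ℝ) {η₁ η₂ : EuclideanSpace ℝ (Fin d) → ℝ}
    (h1 : ContDiff ℝ 1 η₁) (h2 : ContDiff ℝ 1 η₂)
    {u : EuclideanSpace ℝ (Fin d) × ℝ → EuclideanSpace ℝ (Fin d) × ℝ}
    (hu : ContDiff ℝ 1 u) (i : Fin d) (x : EuclideanSpace ℝ (Fin d)) :
    HasFDerivAt (fun x' => ∫ y in c₁..c₂, layerJ c₁ c₂ η₁ η₂ x' * (u (x', y)).1 i)
      (∫ y in c₁..c₂, layerDeriv c₁ c₂ η₁ η₂ u i x y) x := by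
  have hu1 : ContDiff ℝ 1 (fun q => (u q).1 i) := contDiff_u1 hu i
  have hcont : Continuous fun p : EuclideanSpace ℝ (Fin d) × ℝ =>
      layerDeriv c₁ c₂ η₁ η₂ u i p.1 p.2 := layerDeriv_cont c₁ c₂ h1 h2 hu i
  obtain ⟨C, hC⟩ := ((isCompact_closedBall x 1).prod (isCompact_uIcc (a := c₁) (b := c₂))).exists_bound_of_continuousOn hcont.continuousOn
  have key := intervalIntegral.hasFDerivAt_integral_of_dominated_of_fderiv_le
    (F := fun x' t => layerJ c₁ c₂ η₁ η₂ x' * (u (x', t)).1 i)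
    (F' := fun x' t => layerDeriv c₁ c₂ η₁ η₂ u i x' t)
    (x₀ := x) (a := c₁) (b := c₂) (bound := fun _ => C) (μ := volume)
    (s := Metric.ball x 1) (Metric.ball_mem_nhds x one_pos)
    (Filter.Eventually.of_forall fun x' =>
      (Continuous.aestronglyMeasurable (continuous_const.mul
        (hu1.continuous.comp (Continuous.prodMk_right x')))))
    ((continuous_const.mul (hu1.continuous.comp (Continuous.prodMk_right x))).intervalIntegrable _ _)
    ((hcont.comp (Continuous.prodMk_right x)).aestronglyMeasurable)
    (Filter.Eventually.of_forall fun t ht x' hx' =>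
      hC (x', t) ⟨Metric.ball_subset_closedBall hx', Set.uIoc_subset_uIcc ht⟩)
    intervalIntegrable_const
    (Filter.Eventually.of_forall fun t _ x' _ =>
      layerDeriv_hasFDerivAt c₁ c₂ h1 h2 hu i x' t)
  exact key
lemma layer_integral (c₁ c₂ : ℝ) (hc : c₁ < c₂) {η₁ η₂ : EuclideanSpace ℝ (Fin d) → ℝ}
    (h1 : ContDiff ℝ 1 η₁) (h2 : ContDiff ℝ 1 η₂)
    {u : EuclideanSpace ℝ (Fin d) × ℝ → EuclideanSpace ℝ (Fin d) × ℝ}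
    (hu : ContDiff ℝ 1 u) (x : EuclideanSpace ℝ (Fin d))
    (hpos : 0 < c₂ + η₂ x - c₁ - η₁ x) :
    (∫ y in c₁..c₂, flatDiv u (fun p => layerJ c₁ c₂ η₁ η₂ p.1)
        (fun p => c₂ + η₂ p.1 - c₁ - η₁ p.1) (fun _ => c₂ - c₁)
        (fun p => (c₂ - p.2) • gradient η₁ p.1 + (p.2 - c₁) • gradient η₂ p.1) (x, y))
      = (((u (x, c₂)).2 - ⟪(u (x, c₂)).1, gradient η₂ x⟫)
          - ((u (x, c₁)).2 - ⟪(u (x, c₁)).1, gradient η₁ x⟫))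
        + ∑ i, (∫ y in c₁..c₂, layerDeriv c₁ c₂ η₁ η₂ u i x y)
            (EuclideanSpace.single i 1) := by
  have hΔ : (c₂ - c₁) ≠ 0 := sub_ne_zero.mpr hc.ne'
  have hD : (c₂ + η₂ x - c₁ - η₁ x) ≠ 0 := ne_of_gt hpos
  have hu2 : ContDiff ℝ 1 (fun q => (u q).2) := hu.snd
  set g := gradient η₁ x with hg
  set h := gradient η₂ x with hh
  set φ : ℝ → ℝ := fun y => (u (x, y)).2
      - (c₂ - c₁)⁻¹ * ∑ i, ((c₂ - y) * g i + (y - c₁) * h i) * (u (x, y)).1 i with hφdef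
  set φ' : ℝ → ℝ := fun y => fderiv ℝ (fun q => (u q).2) (x, y) (0, 1)
      - (c₂ - c₁)⁻¹ * ∑ i, ((h i - g i) * (u (x, y)).1 i
        + ((c₂ - y) * g i + (y - c₁) * h i) * fderiv ℝ (fun q => (u q).1 i) (x, y) (0, 1))
    with hφ'def
  have hder : ∀ y, HasDerivAt φ (φ' y) y := by
    intro y
    have hA : HasDerivAt (fun t => (u (x, t)).2)
        (fderiv ℝ (fun q => (u q).2) (x, y) (0, 1)) y := hasDerivAt_slice _ hu2 x y
    have hsum : HasDerivAt (fun t => ∑ i, ((c₂ - t) * g i + (t - c₁) * h i) * (u (x, t)).1 i)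
        (∑ i, ((h i - g i) * (u (x, y)).1 i
          + ((c₂ - y) * g i + (y - c₁) * h i)
            * fderiv ℝ (fun q => (u q).1 i) (x, y) (0, 1))) y := by
      apply HasDerivAt.fun_sum
      intro i _
      have hlin : HasDerivAt (fun t => (c₂ - t) * g i + (t - c₁) * h i) (h i - g i) y := by
        have := (((hasDerivAt_id y).const_sub c₂).mul_const (g i)).add
          (((hasDerivAt_id y).sub_const c₁).mul_const (h i))
        exact this.congr_deriv (by ring)
      exact hlin.mul (hasDerivAt_slice (fun q => (u q).1 i) (contDiff_u1 hu i) x y)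
    exact hA.sub (hsum.const_mul _)
  have hu1c : ∀ i : Fin d, Continuous fun y : ℝ => (u (x, y)).1 i := fun i =>
    (contDiff_u1 hu i).continuous.comp (Continuous.prodMk_right x)
  have hC1 : ∀ i : Fin d, Continuous fun y : ℝ =>
      fderiv ℝ (fun q => (u q).1 i) (x, y) ((0 : EuclideanSpace ℝ (Fin d)), (1:ℝ)) := fun i =>
    (((contDiff_u1 hu i).continuous_fderiv one_ne_zero).comp (Continuous.prodMk_right x)).clm_apply
      continuous_const
  have hφ'cont : Continuous φ' := by
    apply Continuous.sub
    · exact ((hu2.continuous_fderiv one_ne_zero).comp (Continuous.prodMk_right x)).clm_apply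
        continuous_const
    · apply continuous_const.mul
      apply continuous_finset_sum
      intro i _
      exact (continuous_const.mul (hu1c i)).add
        ((((continuous_const.sub continuous_id).mul continuous_const).add
          ((continuous_id.sub continuous_const).mul continuous_const)).mul (hC1 i))
  have hFTC : ∫ y in c₁..c₂, φ' y = φ c₂ - φ c₁ :=
    intervalIntegral.integral_eq_sub_of_hasDerivAt (fun y _ => hder y)
      (hφ'cont.intervalIntegrable _ _)
  have hLDc : ∀ i : Fin d, Continuous fun y : ℝ =>
      layerDeriv c₁ c₂ η₁ η₂ u i x y (EuclideanSpace.single i 1) := fun i =>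
    (((layerDeriv_cont c₁ c₂ h1 h2 hu i).comp (Continuous.prodMk_right x)).clm_apply continuous_const)
  have hkey : ∀ y : ℝ, flatDiv u (fun p => layerJ c₁ c₂ η₁ η₂ p.1)
      (fun p => c₂ + η₂ p.1 - c₁ - η₁ p.1) (fun _ => c₂ - c₁)
      (fun p => (c₂ - p.2) • gradient η₁ p.1 + (p.2 - c₁) • gradient η₂ p.1) (x, y)
      = φ' y + ∑ i, layerDeriv c₁ c₂ η₁ η₂ u i x y (EuclideanSpace.single i 1) := by
    intro y
    have happ : ∀ i : Fin d, layerDeriv c₁ c₂ η₁ η₂ u i x y (EuclideanSpace.single i 1)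
        = layerJ c₁ c₂ η₁ η₂ x
            * fderiv ℝ (fun q => (u q).1 i) (x, y)
              ((EuclideanSpace.single i 1 : EuclideanSpace ℝ (Fin d)), (0:ℝ))
          + (u (x, y)).1 i * ((c₂ - c₁)⁻¹ * (h i - g i)) := by
      intro i
      simp [layerDeriv, ContinuousLinearMap.add_apply, ContinuousLinearMap.coe_smul',
        ContinuousLinearMap.comp_apply, ContinuousLinearMap.inl_apply,
        ContinuousLinearMap.sub_apply, smul_eq_mul, fderiv_single', hg, hh]
    have hBv : ∀ i : Fin d, ((c₂ - y) • g + (y - c₁) • h) i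
        = (c₂ - y) * g i + (y - c₁) * h i := fun i => by
      simp [PiLp.add_apply, PiLp.smul_apply, smul_eq_mul]
    simp only [flatDiv, happ, hφ'def]
    simp only [hBv, layerJ]
    set D := c₂ + η₂ x - c₁ - η₁ x with hDdef
    set Δ := c₂ - c₁ with hΔdef
    set Dv := fderiv ℝ (fun q => (u q).2) (x, y)
        ((0 : EuclideanSpace ℝ (Fin d)), (1:ℝ)) with hDv
    set A : Fin d → ℝ := fun i => fderiv ℝ (fun q => (u q).1 i) (x, y)
        ((EuclideanSpace.single i 1 : EuclideanSpace ℝ (Fin d)), (0:ℝ)) with hA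
    set C : Fin d → ℝ := fun i => fderiv ℝ (fun q => (u q).1 i) (x, y)
        ((0 : EuclideanSpace ℝ (Fin d)), (1:ℝ)) with hCc
    set U : Fin d → ℝ := fun i => (u (x, y)).1 i with hU
    set B : Fin d → ℝ := fun i => (c₂ - y) * g i + (y - c₁) * h i with hB
    have e1 : D / Δ * (Δ / D * Dv) = Dv := by field_simp
    calc D / Δ * ((∑ i, (A i - B i / D * C i)) + Δ / D * Dv)
        = (∑ i, (D / Δ * A i - Δ⁻¹ * (B i * C i))) + Dv := by
          rw [mul_add, e1, Finset.mul_sum]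
          congr 1
          refine Finset.sum_congr rfl fun i _ => ?_
          field_simp
      _ = (∑ i, ((D / Δ * A i + U i * (Δ⁻¹ * (h i - g i)))
            - Δ⁻¹ * ((h i - g i) * U i + B i * C i))) + Dv := by
          congr 1
          exact Finset.sum_congr rfl fun i _ => by ring
      _ = (Dv - Δ⁻¹ * ∑ i, ((h i - g i) * U i + B i * C i))
            + ∑ i, (D / Δ * A i + U i * (Δ⁻¹ * (h i - g i))) := by
          rw [Finset.sum_sub_distrib, Finset.mul_sum]
          ring
  calc (∫ y in c₁..c₂, flatDiv u (fun p => layerJ c₁ c₂ η₁ η₂ p.1)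
        (fun p => c₂ + η₂ p.1 - c₁ - η₁ p.1) (fun _ => c₂ - c₁)
        (fun p => (c₂ - p.2) • gradient η₁ p.1 + (p.2 - c₁) • gradient η₂ p.1) (x, y))
      = ∫ y in c₁..c₂,
          (φ' y + ∑ i, layerDeriv c₁ c₂ η₁ η₂ u i x y (EuclideanSpace.single i 1)) := by
        simp only [hkey]
    _ = (∫ y in c₁..c₂, φ' y)
          + ∫ y in c₁..c₂, ∑ i, layerDeriv c₁ c₂ η₁ η₂ u i x y (EuclideanSpace.single i 1) :=
        intervalIntegral.integral_add (hφ'cont.intervalIntegrable _ _)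
          ((continuous_finset_sum _ fun i _ => hLDc i).intervalIntegrable _ _)
    _ = (φ c₂ - φ c₁)
          + ∑ i, ∫ y in c₁..c₂, layerDeriv c₁ c₂ η₁ η₂ u i x y (EuclideanSpace.single i 1) := by
        rw [hFTC, intervalIntegral.integral_finset_sum (fun i _ =>
          (hLDc i).intervalIntegrable _ _)]
    _ = (((u (x, c₂)).2 - ⟪(u (x, c₂)).1, gradient η₂ x⟫)
          - ((u (x, c₁)).2 - ⟪(u (x, c₁)).1, gradient η₁ x⟫))
        + ∑ i, (∫ y in c₁..c₂, layerDeriv c₁ c₂ η₁ η₂ u i x y)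
            (EuclideanSpace.single i 1) := by
        have hint : ∀ i : Fin d, IntervalIntegrable
            (fun y => layerDeriv c₁ c₂ η₁ η₂ u i x y) volume c₁ c₂ := fun i =>
          (((layerDeriv_cont c₁ c₂ h1 h2 hu i).comp (Continuous.prodMk_right x)).intervalIntegrable _ _)
        have hφc₂ : φ c₂ = (u (x, c₂)).2 - ⟪(u (x, c₂)).1, h⟫ := by
          simp only [hφdef, PiLp.inner_apply, RCLike.inner_apply, conj_trivial]
          congr 1
          rw [Finset.mul_sum]
          refine Finset.sum_congr rfl fun i _ => ?_
          field_simp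
          ring
        have hφc₁ : φ c₁ = (u (x, c₁)).2 - ⟪(u (x, c₁)).1, g⟫ := by
          simp only [hφdef, PiLp.inner_apply, RCLike.inner_apply, conj_trivial]
          congr 1
          rw [Finset.mul_sum]
          refine Finset.sum_congr rfl fun i _ => ?_
          field_simp
          ring
        rw [hφc₂, hφc₁]
        congr 1
        refine Finset.sum_congr rfl fun i _ => ?_
        exact (ContinuousLinearMap.intervalIntegral_apply (hint i) _).symm

lemma layerCoef_cont (c₁ c₂ : ℝ) {η₁ η₂ : EuclideanSpace ℝ (Fin d) → ℝ}
    (h1 : ContDiff ℝ 1 η₁) (h2 : ContDiff ℝ 1 η₂)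
    {u : EuclideanSpace ℝ (Fin d) × ℝ → EuclideanSpace ℝ (Fin d) × ℝ}
    (hu : ContDiff ℝ 1 u) (x : EuclideanSpace ℝ (Fin d)) :
    Continuous fun y : ℝ => flatDiv u (fun p => layerJ c₁ c₂ η₁ η₂ p.1)
      (fun p => c₂ + η₂ p.1 - c₁ - η₁ p.1) (fun _ => c₂ - c₁)
      (fun p => (c₂ - p.2) • gradient η₁ p.1 + (p.2 - c₁) • gradient η₂ p.1) (x, y) := by
  simp only [flatDiv, PiLp.add_apply, PiLp.smul_apply, smul_eq_mul]
  apply continuous_const.mul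
  apply Continuous.add
  · apply continuous_finset_sum
    intro i _
    apply Continuous.sub
    · exact (((contDiff_u1 hu i).continuous_fderiv one_ne_zero).comp
        (Continuous.prodMk_right x)).clm_apply continuous_const
    · exact ((((continuous_const.sub continuous_id).mul continuous_const).add
        ((continuous_id.sub continuous_const).mul continuous_const)).div_const _).mul
        ((((contDiff_u1 hu i).continuous_fderiv one_ne_zero).comp
          (Continuous.prodMk_right x)).clm_apply continuous_const)
  · exact continuous_const.mul (((hu.snd.continuous_fderiv one_ne_zero).comp
      (Continuous.prodMk_right x)).clm_apply continuous_const)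


/-- **nonlinear divergence compatibility.** For the multilayer flattening
geometry built from `C¹` interface functions `η₁,…,η_m` satisfying the uniform separation
condition, and `u ∈ H¹` (here `C¹`) vanishing on the bottom boundary,
`∫₀^{a_ℓ} (J𝒜∇)·u dy = u·𝒩_ℓ(·,a_ℓ) + ∇_∥ · ∫₀^{a_ℓ} J 𝒜ᵀ u dy` for each `ℓ`, where
`𝒩_ℓ = (−∇η_ℓ, 1)` and the horizontal part of `J𝒜ᵀu` is `J u_h`. -/
theorem stmt_19 (d m : ℕ) (hm : 1 ≤ m) (a : ℕ → ℝ) (ha0 : a 0 = 0)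
    (hamono : ∀ k < m, a k < a (k + 1)) (η : ℕ → EuclideanSpace ℝ (Fin d) → ℝ)
    (hη0 : η 0 = 0) (hηC1 : ∀ ℓ ≤ m, ContDiff ℝ 1 (η ℓ))
    (hbound : ∀ ℓ, 1 ≤ ℓ → ℓ ≤ m → ∀ (x : EuclideanSpace ℝ (Fin d)) (k : ℕ), k < m →
      |η ℓ x| ≤ (1 / 2) * (a (k + 1) - a k))
    (hnondeg : ∀ k < m, ∀ x : EuclideanSpace ℝ (Fin d),
      0 < a (k + 1) + η (k + 1) x - a k - η k x)
    (u : EuclideanSpace ℝ (Fin d) × ℝ → EuclideanSpace ℝ (Fin d) × ℝ)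
    (hu : ContDiff ℝ 1 u) (hbot : ∀ x : EuclideanSpace ℝ (Fin d), u (x, 0) = 0)
    (J δf : EuclideanSpace ℝ (Fin d) × ℝ → ℝ) (Δf : ℝ → ℝ)
    (Bv : EuclideanSpace ℝ (Fin d) × ℝ → EuclideanSpace ℝ (Fin d))
    (hJ : ∀ k < m, ∀ (x : EuclideanSpace ℝ (Fin d)), ∀ y ∈ Set.Ioo (a k) (a (k + 1)),
      J (x, y) = (a (k + 1) + η (k + 1) x - a k - η k x) / (a (k + 1) - a k))
    (hδ : ∀ k < m, ∀ (x : EuclideanSpace ℝ (Fin d)), ∀ y ∈ Set.Ioo (a k) (a (k + 1)),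
      δf (x, y) = a (k + 1) + η (k + 1) x - a k - η k x)
    (hΔ : ∀ k < m, ∀ y ∈ Set.Ioo (a k) (a (k + 1)), Δf y = a (k + 1) - a k)
    (hB : ∀ k < m, ∀ (x : EuclideanSpace ℝ (Fin d)), ∀ y ∈ Set.Ioo (a k) (a (k + 1)),
      Bv (x, y) = (a (k + 1) - y) • gradient (η k) x + (y - a k) • gradient (η (k + 1)) x) :
    ∀ ℓ, 1 ≤ ℓ → ℓ ≤ m → ∀ x : EuclideanSpace ℝ (Fin d),
      (∫ y in (0 : ℝ)..(a ℓ), flatDiv u J δf Δf Bv (x, y)) =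
        ((u (x, a ℓ)).2 - ⟪(u (x, a ℓ)).1, gradient (η ℓ) x⟫) +
          ∑ i, fderiv ℝ
            (fun x' : EuclideanSpace ℝ (Fin d) =>
              ∫ y in (0 : ℝ)..(a ℓ), J (x', y) * (u (x', y)).1 i) x
            (EuclideanSpace.single i 1) := by
  intro ℓ hℓ1 hℓm x
  have hkmlt : ∀ k ∈ Finset.range ℓ, k < m := fun k hk =>
    lt_of_lt_of_le (Finset.mem_range.mp hk) hℓm
  set ψ : ℕ → ℝ := fun k => (u (x, a k)).2 - ⟪(u (x, a k)).1, gradient (η k) x⟫ with hψ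
  have hψ0 : ψ 0 = 0 := by simp [hψ, ha0, hbot x]
  have hpt : ∀ k, k < m → ∀ (x' : EuclideanSpace ℝ (Fin d)),
      ∀ y ∈ Set.Ioo (a k) (a (k + 1)),
      flatDiv u J δf Δf Bv (x', y)
        = flatDiv u (fun p => layerJ (a k) (a (k+1)) (η k) (η (k+1)) p.1)
          (fun p => a (k+1) + η (k+1) p.1 - a k - η k p.1) (fun _ => a (k+1) - a k)
          (fun p => (a (k+1) - p.2) • gradient (η k) p.1
            + (p.2 - a k) • gradient (η (k+1)) p.1) (x', y) := by
    intro k hk x' y hy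
    simp only [flatDiv, layerJ]
    rw [hJ k hk x' y hy, hδ k hk x' y hy, hB k hk x' y hy, hΔ k hk y hy]
  have hInt : ∀ k < ℓ, IntervalIntegrable (fun y => flatDiv u J δf Δf Bv (x, y))
      volume (a k) (a (k + 1)) := by
    intro k hk
    have hk' : k < m := lt_of_lt_of_le hk hℓm
    refine ((layerCoef_cont (a k) (a (k+1)) (hηC1 k hk'.le) (hηC1 (k+1) hk') hu
      x).intervalIntegrable _ _).congr_ae ?_
    refine (ae_restrict_iff' measurableSet_uIoc).mpr ?_
    exact ae_imp_uIoc (hamono k hk').le fun y hy => (hpt k hk' x y hy).symm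
  have hsum1 := intervalIntegral.sum_integral_adjacent_intervals hInt
  rw [ha0] at hsum1
  rw [← hsum1]
  have hlayer : ∀ k ∈ Finset.range ℓ,
      (∫ y in a k..a (k + 1), flatDiv u J δf Δf Bv (x, y))
        = (ψ (k + 1) - ψ k) + ∑ i, (∫ y in a k..a (k + 1),
            layerDeriv (a k) (a (k+1)) (η k) (η (k+1)) u i x y)
            (EuclideanSpace.single i 1) := by
    intro k hk
    have hk' : k < m := hkmlt k hk
    rw [intervalIntegral.integral_congr_ae
      (ae_imp_uIoc (hamono k hk').le fun y hy => hpt k hk' x y hy)]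
    exact layer_integral (a k) (a (k+1)) (hamono k hk') (hηC1 k hk'.le)
      (hηC1 (k+1) hk') hu x (hnondeg k hk' x)
  rw [Finset.sum_congr rfl hlayer, Finset.sum_add_distrib,
    Finset.sum_range_sub (fun k => ψ k), hψ0, sub_zero]
  congr 1
  have hfun : ∀ i : Fin d, (fun x' => ∫ y in (0:ℝ)..(a ℓ), J (x', y) * (u (x', y)).1 i)
      = fun x' => ∑ k ∈ Finset.range ℓ, ∫ y in a k..a (k+1),
          layerJ (a k) (a (k+1)) (η k) (η (k+1)) x' * (u (x', y)).1 i := by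
    intro i
    funext x'
    have hIk : ∀ k < ℓ, IntervalIntegrable (fun y => J (x', y) * (u (x', y)).1 i)
        volume (a k) (a (k + 1)) := by
      intro k hk
      have hk' : k < m := lt_of_lt_of_le hk hℓm
      have hcont : Continuous fun y : ℝ =>
          layerJ (a k) (a (k+1)) (η k) (η (k+1)) x' * (u (x', y)).1 i :=
        continuous_const.mul ((contDiff_u1 hu i).continuous.comp (Continuous.prodMk_right x'))
      refine (hcont.intervalIntegrable _ _).congr_ae ?_
      refine (ae_restrict_iff' measurableSet_uIoc).mpr ?_
      refine ae_imp_uIoc (hamono k hk').le fun y hy => ?_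
      rw [hJ k hk' x' y hy, layerJ]
    have h2 := intervalIntegral.sum_integral_adjacent_intervals hIk
    rw [ha0] at h2
    rw [← h2]
    refine Finset.sum_congr rfl fun k hk => ?_
    have hk' : k < m := hkmlt k hk
    refine intervalIntegral.integral_congr_ae
      (ae_imp_uIoc (hamono k hk').le fun y hy => ?_)
    rw [hJ k hk' x' y hy, layerJ]
  have happ : ∀ i : Fin d,
      fderiv ℝ (fun x' => ∫ y in (0:ℝ)..(a ℓ), J (x', y) * (u (x', y)).1 i) x
          (EuclideanSpace.single i 1)
        = ∑ k ∈ Finset.range ℓ, (∫ y in a k..a (k+1),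
            layerDeriv (a k) (a (k+1)) (η k) (η (k+1)) u i x y)
            (EuclideanSpace.single i 1) := by
    intro i
    have hHas : HasFDerivAt (fun x' => ∑ k ∈ Finset.range ℓ, ∫ y in a k..a (k+1),
        layerJ (a k) (a (k+1)) (η k) (η (k+1)) x' * (u (x', y)).1 i)
        (∑ k ∈ Finset.range ℓ, ∫ y in a k..a (k+1),
          layerDeriv (a k) (a (k+1)) (η k) (η (k+1)) u i x y) x := by
      refine HasFDerivAt.fun_sum fun k hk => ?_
      have hk' : k < m := hkmlt k hk
      exact layer_hasFDerivAt (a k) (a (k+1)) (hηC1 k hk'.le) (hηC1 (k+1) hk') hu i x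
    rw [hfun i, hHas.fderiv]
    simp [ContinuousLinearMap.sum_apply]
  rw [Finset.sum_congr rfl fun i _ => happ i]
  exact Finset.sum_comm
end
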